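/- Let κ_h denote the Killing vector field on hyperbolic 3-space ℍ³ (upper half-space model, viewed in the quaternions) generated by h ∈ sl₂(ℂ) via the PSL₂(ℂ) isometric action. Then at the point q ∈ ℍ³, κ_h(q) = b + aq + qa − qcq where h = [[a,b],[c,−a]], identifying T_qℍ³ with ℂ ⊕ jℝ, and the Killing fields satisfy κ_{ih} = −(1/2) curl(κ_h). -/

import Mathlib

/-!
Hyperbolic 3-space `ℍ³ = {y₁ + i y₂ + j y₃ : y₃ > 0}` inside the quaternions,
with metric `|dy|²/y₃²`.  `PSL₂(ℂ)` acts by `γ·ζ = (aζ+b)(cζ+d)⁻¹` (complex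
numbers embedded in the quaternions), and for `h = [[a,b],[c,−a]] ∈ sl₂(ℂ)` the
Killing field `κ_h` is the derivative at `t = 0` of the flow `t ↦ γ(t)·ζ` of any
differentiable curve `γ` in `SL₂(ℂ)` with `γ(0) = 1`, `γ'(0) = h`.
First claim: `κ_h(ζ) = b + aζ + ζa − ζcζ`, identifying `T_ζℍ³` with `ℂ ⊕ jℝ`.
Second claim: `κ_{ih} = −(1/2) curl(κ_h)`, where the curl is with respect to the
hyperbolic metric and the standard orientation; in the coordinates
`y = (y₁,y₂,y₃)`, for a conformally flat metric `λ²δ` with `λ = 1/y₃`,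
`curl(u)^k = λ⁻³ (∂_{k+1}(λ² u_{k+2}) − ∂_{k+2}(λ² u_{k+1}))` (indices cyclic).
-/

noncomputable section

/-- Embedding of `ℂ` into the quaternions. -/
def cq (z : ℂ) : Quaternion ℝ := ⟨z.re, z.im, 0, 0⟩

/-- The point of `ℍ³ ⊂ quaternions` with coordinates `y = (y₁,y₂,y₃)`. -/
def toQ (y : Fin 3 → ℝ) : Quaternion ℝ := ⟨y 0, y 1, y 2, 0⟩

/-- Coordinates of a tangent vector of `ℍ³`, i.e. a quaternion in `ℂ ⊕ jℝ`. -/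
def projQ (q : Quaternion ℝ) : Fin 3 → ℝ := ![q.re, q.imI, q.imJ]

/-- The vector field `ζ ↦ b + aζ + ζa − ζcζ` on `ℍ³`, in coordinates. -/
def kappaField (a b c : ℂ) (y : Fin 3 → ℝ) : Fin 3 → ℝ :=
  projQ (cq b + cq a * toQ y + toQ y * cq a - toQ y * cq c * toQ y)

/-- Partial derivative of a function of `y ∈ ℝ³`. -/
def pd (f : (Fin 3 → ℝ) → ℝ) (i : Fin 3) (y : Fin 3 → ℝ) : ℝ :=
  fderiv ℝ f y (Pi.single i 1)

/-- The curl of a vector field on the upper half-space, with respect to the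
hyperbolic metric `(dy₁² + dy₂² + dy₃²)/y₃²` and the standard orientation:
`curl(u) = (*_g d u^♭)^♯`, which in coordinates reads
`curl(u)^k = y₃³ (∂_{k+1}(u_{k+2}/y₃²) − ∂_{k+2}(u_{k+1}/y₃²))`. -/
def hypCurl (F : (Fin 3 → ℝ) → (Fin 3 → ℝ)) (y : Fin 3 → ℝ) : Fin 3 → ℝ :=
  fun k => (y 2) ^ 3 * (pd (fun z => F z (k + 2) / (z 2) ^ 2) (k + 1) y
                      - pd (fun z => F z (k + 1) / (z 2) ^ 2) (k + 2) y)

/- ### Auxiliary lemmas -/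

@[simp] lemma cq_re (z : ℂ) : (cq z).re = z.re := rfl
@[simp] lemma cq_imI (z : ℂ) : (cq z).imI = z.im := rfl
@[simp] lemma cq_imJ (z : ℂ) : (cq z).imJ = 0 := rfl
@[simp] lemma cq_imK (z : ℂ) : (cq z).imK = 0 := rfl
@[simp] lemma toQ_re (y : Fin 3 → ℝ) : (toQ y).re = y 0 := rfl
@[simp] lemma toQ_imI (y : Fin 3 → ℝ) : (toQ y).imI = y 1 := rfl
@[simp] lemma toQ_imJ (y : Fin 3 → ℝ) : (toQ y).imJ = y 2 := rfl
@[simp] lemma toQ_imK (y : Fin 3 → ℝ) : (toQ y).imK = 0 := rfl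

lemma quat_ext {p q : Quaternion ℝ} (h1 : p.re = q.re) (h2 : p.imI = q.imI)
    (h3 : p.imJ = q.imJ) (h4 : p.imK = q.imK) : p = q := by
  apply Quaternion.ext <;> assumption

/-- `cq` as a continuous `ℝ`-linear map. -/
def cqC : ℂ →L[ℝ] Quaternion ℝ :=
  LinearMap.toContinuousLinearMap
    { toFun := cq
      map_add' := by intro x y; exact quat_ext (by simp) (by simp) (by simp) (by simp)
      map_smul' := by
        intro r x
        exact quat_ext (by simp) (by simp) (by simp) (by simp) }

@[simp] lemma cqC_apply (z : ℂ) : cqC z = cq z := rfl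

lemma cq_zero : cq 0 = 0 := quat_ext (by simp; rfl) (by simp; rfl) (by simp; rfl) (by simp; rfl)
lemma cq_one : cq 1 = 1 := quat_ext (by simp; rfl) (by simp; rfl) (by simp; rfl) (by simp; rfl)
lemma cq_neg (z : ℂ) : cq (-z) = -cq z :=
  quat_ext (by simp) (by simp) (by simp) (by simp)

/-- `toQ` as a continuous `ℝ`-linear map. -/
def toQC : (Fin 3 → ℝ) →L[ℝ] Quaternion ℝ :=
  LinearMap.toContinuousLinearMap
    { toFun := toQ
      map_add' := by intro x y; exact quat_ext (by simp) (by simp) (by simp) (by simp)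
      map_smul' := by
        intro r x
        exact quat_ext (by simp) (by simp) (by simp) (by simp) }

@[simp] lemma toQC_apply (v : Fin 3 → ℝ) : toQC v = toQ v := rfl

lemma hasFDerivAt_toQ (y : Fin 3 → ℝ) : HasFDerivAt toQ toQC y :=
  toQC.hasFDerivAt

/-- Derivative of the quadratic quaternion expression. -/
lemma hasK (a b c : ℂ) (y : Fin 3 → ℝ) :
    ∃ L : (Fin 3 → ℝ) →L[ℝ] Quaternion ℝ,
      HasFDerivAt
        (fun z => cq b + cq a * toQ z + toQ z * cq a - toQ z * cq c * toQ z) L y ∧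
      ∀ v, L v = cq a * toQ v + toQ v * cq a -
        (toQ v * cq c * toQ y + toQ y * cq c * toQ v) := by
  have ht := hasFDerivAt_toQ y
  have h1 : HasFDerivAt (fun _ : Fin 3 → ℝ => cq b)
      (0 : (Fin 3 → ℝ) →L[ℝ] Quaternion ℝ) y := hasFDerivAt_const _ _
  have h2 := ht.const_mul (cq a)
  have h3 := ht.mul_const' (cq a)
  have h3c : HasFDerivAt (fun z => toQ z * cq c) (toQC.smulRight (cq c)) y :=
    ht.mul_const' (cq c)
  have h4 := h3c.mul' ht
  refine ⟨_, ((h1.add h2).add h3).sub h4, fun v => ?_⟩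
  simp [ContinuousLinearMap.smulRight_apply, mul_assoc]
  exact add_comm _ _

/-- The three coordinate projections of a quaternion, as continuous linear maps. -/
def projC : Fin 3 → (Quaternion ℝ →L[ℝ] ℝ) :=
  ![LinearMap.toContinuousLinearMap
      { toFun := QuaternionAlgebra.re, map_add' := by simp, map_smul' := by simp },
    LinearMap.toContinuousLinearMap
      { toFun := QuaternionAlgebra.imI, map_add' := by simp, map_smul' := by simp },
    LinearMap.toContinuousLinearMap
      { toFun := QuaternionAlgebra.imJ, map_add' := by simp, map_smul' := by simp }]

lemma projC_apply (j : Fin 3) (q : Quaternion ℝ) : projC j q = projQ q j := by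
  fin_cases j <;> rfl

/-- The key partial-derivative computation. -/
lemma pd_kappa (a b c : ℂ) (j i : Fin 3) (y : Fin 3 → ℝ) (hy : y 2 ≠ 0) :
    pd (fun z => kappaField a b c z j / (z 2) ^ 2) i y
      = projQ (cq a * toQ (Pi.single i 1) + toQ (Pi.single i 1) * cq a -
            (toQ (Pi.single i 1) * cq c * toQ y + toQ y * cq c * toQ (Pi.single i 1))) j
          / (y 2) ^ 2
        + kappaField a b c y j * (-(2 * y 2) / ((y 2) ^ 2) ^ 2)
          * (Pi.single i 1 : Fin 3 → ℝ) 2 := by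
  obtain ⟨L, hL, hLv⟩ := hasK a b c y
  have hf : HasFDerivAt (fun z => kappaField a b c z j) ((projC j).comp L) y := by
    have h := ((projC j).hasFDerivAt (x := (cq b + cq a * toQ y + toQ y * cq a
        - toQ y * cq c * toQ y))).comp y hL
    have h2 : (⇑(projC j) ∘ fun z =>
        cq b + cq a * toQ z + toQ z * cq a - toQ z * cq c * toQ z)
        = fun z => kappaField a b c z j := by
      funext z
      simp only [Function.comp_apply, projC_apply, kappaField]
    exact h2 ▸ h
  have hp2 : HasFDerivAt (fun z : Fin 3 → ℝ => z 2)
      (ContinuousLinearMap.proj 2 : (Fin 3 → ℝ) →L[ℝ] ℝ) y :=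
    (ContinuousLinearMap.proj 2 : (Fin 3 → ℝ) →L[ℝ] ℝ).hasFDerivAt
  have hsq : HasDerivAt (fun t : ℝ => (t ^ 2)⁻¹)
      (-(2 * y 2 ^ 1) / ((y 2) ^ 2) ^ 2) (y 2) :=
    (hasDerivAt_pow 2 (y 2)).inv (pow_ne_zero 2 hy)
  have hg : HasFDerivAt (fun z : Fin 3 → ℝ => ((z 2) ^ 2)⁻¹)
      ((-(2 * y 2 ^ 1) / ((y 2) ^ 2) ^ 2) • (ContinuousLinearMap.proj 2 :
        (Fin 3 → ℝ) →L[ℝ] ℝ)) y := by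
    have := hsq.comp_hasFDerivAt y hp2
    simpa [Function.comp_def] using this
  have hfg : HasFDerivAt (fun z => kappaField a b c z j * ((z 2) ^ 2)⁻¹) _ y := hf.mul hg
  have heq : (fun z => kappaField a b c z j / (z 2) ^ 2)
      = fun z => kappaField a b c z j * ((z 2) ^ 2)⁻¹ := by
    funext z; rw [div_eq_mul_inv]
  rw [pd, heq, hfg.fderiv]
  simp only [ContinuousLinearMap.add_apply, ContinuousLinearMap.smul_apply,
    ContinuousLinearMap.coe_comp', Function.comp_apply, ContinuousLinearMap.proj_apply,
    smul_eq_mul]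
  rw [projC_apply, hLv]
  rw [pow_one]
  ring

set_option maxHeartbeats 1000000 in
theorem stmt_19 (a b c : ℂ)
    (γ : ℝ → Matrix (Fin 2) (Fin 2) ℂ)
    (hγ0 : γ 0 = 1)
    (hγ' : ∀ i j, HasDerivAt (fun t => γ t i j) (!![a, b; c, -a] i j) 0) :
    -- (1) the Killing field generated by `h = [[a,b],[c,−a]]` is
    --     `κ_h(ζ) = b + aζ + ζa − ζcζ`:
    (∀ ζ : Quaternion ℝ, ζ.imK = 0 → 0 < ζ.imJ →
      HasDerivAt
        (fun t => (cq (γ t 0 0) * ζ + cq (γ t 0 1))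
            * (cq (γ t 1 0) * ζ + cq (γ t 1 1))⁻¹)
        (cq b + cq a * ζ + ζ * cq a - ζ * cq c * ζ) 0)
    -- (2) `κ_{ih} = −(1/2) curl(κ_h)` on `ℍ³`:
    ∧ (∀ y : Fin 3 → ℝ, 0 < y 2 →
        kappaField (Complex.I * a) (Complex.I * b) (Complex.I * c) y
          = (-(1 / 2 : ℝ)) • hypCurl (kappaField a b c) y) := by
  constructor
  · intro ζ _ _
    -- derivatives of the matrix entries, pushed through `cq`
    have hc : ∀ i j, HasDerivAt (fun t => cq (γ t i j)) (cq (!![a, b; c, -a] i j)) 0 :=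
      fun i j => cqC.hasFDerivAt.comp_hasDerivAt 0 (hγ' i j)
    have e00 : (!![a, b; c, -a] : Matrix (Fin 2) (Fin 2) ℂ) 0 0 = a := by simp
    have e01 : (!![a, b; c, -a] : Matrix (Fin 2) (Fin 2) ℂ) 0 1 = b := by simp
    have e10 : (!![a, b; c, -a] : Matrix (Fin 2) (Fin 2) ℂ) 1 0 = c := by simp
    have e11 : (!![a, b; c, -a] : Matrix (Fin 2) (Fin 2) ℂ) 1 1 = -a := by simp
    have hN : HasDerivAt (fun t => cq (γ t 0 0) * ζ + cq (γ t 0 1))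
        (cq a * ζ + cq b) 0 := by
      have := ((hc 0 0).mul_const ζ).add (hc 0 1)
      rwa [e00, e01] at this
    have hM : HasDerivAt (fun t => cq (γ t 1 0) * ζ + cq (γ t 1 1))
        (cq c * ζ + cq (-a)) 0 := by
      have := ((hc 1 0).mul_const ζ).add (hc 1 1)
      rwa [e10, e11] at this
    have hM0 : cq (γ 0 1 0) * ζ + cq (γ 0 1 1) = 1 := by
      rw [hγ0]
      have : (1 : Matrix (Fin 2) (Fin 2) ℂ) 1 0 = 0 := by simp [Matrix.one_apply]
      have h2 : (1 : Matrix (Fin 2) (Fin 2) ℂ) 1 1 = 1 := by simp [Matrix.one_apply]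
      rw [this, h2, cq_zero, cq_one, zero_mul, zero_add]
    have hInvAt : HasFDerivAt (Inv.inv : Quaternion ℝ → Quaternion ℝ)
        (-(ContinuousLinearMap.mulLeftRight ℝ (Quaternion ℝ)
            ((1 : (Quaternion ℝ)ˣ)⁻¹ : (Quaternion ℝ)ˣ)
            ((1 : (Quaternion ℝ)ˣ)⁻¹ : (Quaternion ℝ)ˣ)))
        ((1 : (Quaternion ℝ)ˣ) : Quaternion ℝ) := by
      have := hasFDerivAt_ringInverse (𝕜 := ℝ) (1 : (Quaternion ℝ)ˣ)
      rwa [Ring.inverse_eq_inv'] at this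
    have hMinv : HasDerivAt (fun t => (cq (γ t 1 0) * ζ + cq (γ t 1 1))⁻¹)
        (-(cq c * ζ + cq (-a))) 0 := by
      have hcomp := hInvAt.comp_hasDerivAt_of_eq 0 hM (by simp [hM0])
      simpa [Function.comp_def] using hcomp
    have h := hN.mul hMinv
    have h00 : γ 0 0 0 = 1 := by rw [hγ0]; simp [Matrix.one_apply]
    have h01 : γ 0 0 1 = 0 := by rw [hγ0]; simp [Matrix.one_apply]
    have hval : (cq a * ζ + cq b) * (cq (γ 0 1 0) * ζ + cq (γ 0 1 1))⁻¹
        + (cq (γ 0 0 0) * ζ + cq (γ 0 0 1)) * -(cq c * ζ + cq (-a))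
        = cq b + cq a * ζ + ζ * cq a - ζ * cq c * ζ := by
      rw [h00, h01, hM0, cq_zero, cq_one, cq_neg, inv_one]
      noncomm_ring
    exact hval ▸ h
  · intro y hy
    have hy' : y 2 ≠ 0 := ne_of_gt hy
    funext k
    fin_cases k
    · show kappaField (Complex.I * a) (Complex.I * b) (Complex.I * c) y 0
        = (-(1 / 2 : ℝ)) • hypCurl (kappaField a b c) y 0
      simp only [hypCurl, smul_eq_mul]
      rw [show ((0 : Fin 3) + 2) = 2 from rfl, show ((0 : Fin 3) + 1) = 1 from rfl]
      rw [pd_kappa a b c 2 1 y hy', pd_kappa a b c 1 2 y hy']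
      simp only [kappaField, projQ, toQ_re, toQ_imI, toQ_imJ, toQ_imK, cq_re, cq_imI, cq_imJ,
        cq_imK, Quaternion.re_mul, Quaternion.imI_mul,
        Quaternion.imJ_mul, Quaternion.imK_mul, Quaternion.re_add, Quaternion.imI_add,
        Quaternion.imJ_add, Quaternion.imK_add, Quaternion.re_sub, Quaternion.imI_sub,
        Quaternion.imJ_sub, Quaternion.imK_sub, Matrix.cons_val_zero, Matrix.cons_val_one,
        Matrix.head_cons, Matrix.cons_val_two, Matrix.tail_cons, Pi.single_apply,
        Complex.mul_re, Complex.mul_im, Complex.I_re, Complex.I_im, smul_eq_mul,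
        Fin.reduceEq, reduceIte]
      norm_num
      field_simp
      ring
    · show kappaField (Complex.I * a) (Complex.I * b) (Complex.I * c) y 1
        = (-(1 / 2 : ℝ)) • hypCurl (kappaField a b c) y 1
      simp only [hypCurl, smul_eq_mul]
      rw [show ((1 : Fin 3) + 2) = 0 from rfl, show ((1 : Fin 3) + 1) = 2 from rfl]
      rw [pd_kappa a b c 0 2 y hy', pd_kappa a b c 2 0 y hy']
      simp only [kappaField, projQ, toQ_re, toQ_imI, toQ_imJ, toQ_imK, cq_re, cq_imI, cq_imJ,
        cq_imK, Quaternion.re_mul, Quaternion.imI_mul,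
        Quaternion.imJ_mul, Quaternion.imK_mul, Quaternion.re_add, Quaternion.imI_add,
        Quaternion.imJ_add, Quaternion.imK_add, Quaternion.re_sub, Quaternion.imI_sub,
        Quaternion.imJ_sub, Quaternion.imK_sub, Matrix.cons_val_zero, Matrix.cons_val_one,
        Matrix.head_cons, Matrix.cons_val_two, Matrix.tail_cons, Pi.single_apply,
        Complex.mul_re, Complex.mul_im, Complex.I_re, Complex.I_im, smul_eq_mul,
        Fin.reduceEq, reduceIte]
      norm_num
      field_simp
      ring
    · show kappaField (Complex.I * a) (Complex.I * b) (Complex.I * c) y 2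
        = (-(1 / 2 : ℝ)) • hypCurl (kappaField a b c) y 2
      simp only [hypCurl, smul_eq_mul]
      rw [show ((2 : Fin 3) + 2) = 1 from rfl, show ((2 : Fin 3) + 1) = 0 from rfl]
      rw [pd_kappa a b c 1 0 y hy', pd_kappa a b c 0 1 y hy']
      simp only [kappaField, projQ, toQ_re, toQ_imI, toQ_imJ, toQ_imK, cq_re, cq_imI, cq_imJ,
        cq_imK, Quaternion.re_mul, Quaternion.imI_mul,
        Quaternion.imJ_mul, Quaternion.imK_mul, Quaternion.re_add, Quaternion.imI_add,
        Quaternion.imJ_add, Quaternion.imK_add, Quaternion.re_sub, Quaternion.imI_sub,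
        Quaternion.imJ_sub, Quaternion.imK_sub, Matrix.cons_val_zero, Matrix.cons_val_one,
        Matrix.head_cons, Matrix.cons_val_two, Matrix.tail_cons, Pi.single_apply,
        Complex.mul_re, Complex.mul_im, Complex.I_re, Complex.I_im, smul_eq_mul,
        Fin.reduceEq, reduceIte]
      norm_num
      field_simp
      ring
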